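/- The lattice S₁₁, i.e., ℤ²⁰ equipped with the bilinear form given by the 20×20 Gram matrix M below, is negative definite: for every nonzero x ∈ ℤ²⁰ one has xᵀMx < 0. -/

import Mathlib

open Matrix

/-- The Gram matrix of the lattice `S₁₁`. -/
def S11 : Matrix (Fin 20) (Fin 20) ℤ :=
  !![-4, 1, -2, -2, -1, 1, -1, 1, -1, -1, 2, 1, -1, 2, -1, -2, -2, 2, 1, -1;
     1, -4, -1, -1, -1, -1, -1, 1, -1, 2, -1, -2, 2, 0, -1, 0, 0, -1, -2, 1;
     -2, -1, -4, -2, -1, -1, 0, 1, 0, -1, 1, 0, -1, 2, -2, -1, -1, 0, 0, 1;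
     -2, -1, -2, -4, 0, 0, -2, 0, -1, 0, 2, 1, 0, 1, 0, 0, -1, 1, 0, -1;
     -1, -1, -1, 0, -4, 1, -1, 2, -2, -1, 1, 0, -1, 0, -2, -2, 0, 1, 1, -1;
     1, -1, -1, 0, 1, -4, 0, -1, 0, 1, -2, -1, 0, -1, -1, 0, -1, 0, -1, 1;
     -1, -1, 0, -2, -1, 0, -4, 1, -2, 1, 1, 1, 0, -1, 0, -1, 0, 2, 0, -2;
     1, 1, 1, 0, 2, -1, 1, -4, 0, 0, -1, 1, 1, 0, 2, 1, 0, -1, 1, 0;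
     -1, -1, 0, -1, -2, 0, -2, 0, -4, 0, 0, 1, 1, 0, -1, -2, 0, 2, 0, -2;
     -1, 2, -1, 0, -1, 1, 1, 0, 0, -4, 1, 1, -2, 1, 0, 0, 1, 1, 1, 0;
     2, -1, 1, 2, 1, -2, 1, -1, 0, 1, -4, -2, 2, -1, 0, 0, 0, -1, -2, 1;
     1, -2, 0, 1, 0, -1, 1, 1, 1, 1, -2, -4, 1, 0, -1, 0, -1, -1, -2, 2;
     -1, 2, -1, 0, -1, 0, 0, 1, 1, -2, 2, 1, -4, 0, -1, 0, 0, 1, 2, 0;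
     2, 0, 2, 1, 0, -1, -1, 0, 0, 1, -1, 0, 0, -4, 1, 1, 1, 0, 0, -1;
     -1, -1, -2, 0, -2, -1, 0, 2, -1, 0, 0, -1, -1, 1, -4, -2, -1, 1, 0, 0;
     -2, 0, -1, 0, -2, 0, -1, 1, -2, 0, 0, 0, 0, 1, -2, -4, -2, 2, 0, -1;
     -2, 0, -1, -1, 0, -1, 0, 0, 0, 1, 0, -1, 0, 1, -1, -2, -4, 1, 0, 0;
     2, -1, 0, 1, 1, 0, 2, -1, 2, 1, -1, -1, 1, 0, 1, 2, 1, -4, 0, 2;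
     1, -2, 0, 0, 1, -1, 0, 1, 0, 1, -2, -2, 2, 0, 0, 0, 0, 0, -4, 1;
     -1, 1, 1, -1, -1, 1, -2, 0, -2, 0, 1, 2, 0, -1, 0, -1, 0, 2, 1, -4]

set_option maxHeartbeats 10000000 in
private lemma S11_main (y0 y1 y2 y3 y4 y5 y6 y7 y8 y9 y10 y11 y12 y13 y14 y15 y16 y17 y18 y19 : ℤ)
    (hy : ¬(y0 = 0 ∧ y1 = 0 ∧ y2 = 0 ∧ y3 = 0 ∧ y4 = 0 ∧ y5 = 0 ∧ y6 = 0 ∧ y7 = 0 ∧ y8 = 0 ∧ y9 = 0 ∧ y10 = 0 ∧ y11 = 0 ∧ y12 = 0 ∧ y13 = 0 ∧ y14 = 0 ∧ y15 = 0 ∧ y16 = 0 ∧ y17 = 0 ∧ y18 = 0 ∧ y19 = 0)) :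
    ![y0, y1, y2, y3, y4, y5, y6, y7, y8, y9, y10, y11, y12, y13, y14, y15, y16, y17, y18, y19] ⬝ᵥ S11.mulVec ![y0, y1, y2, y3, y4, y5, y6, y7, y8, y9, y10, y11, y12, y13, y14, y15, y16, y17, y18, y19] < 0 := by
  obtain ⟨Q0, hQ0⟩ : ∃ q : ℤ, q = (4 * y0 * y0 + -2 * y0 * y1 + 4 * y0 * y2 + 4 * y0 * y3 + 2 * y0 * y4 + -2 * y0 * y5 + 2 * y0 * y6 + -2 * y0 * y7 + 2 * y0 * y8 + 2 * y0 * y9 + -4 * y0 * y10 + -2 * y0 * y11 + 2 * y0 * y12 + -4 * y0 * y13 + 2 * y0 * y14 + 4 * y0 * y15 + 4 * y0 * y16 + -4 * y0 * y17 + -2 * y0 * y18 + 2 * y0 * y19 + 4 * y1 * y1 + 2 * y1 * y2 + 2 * y1 * y3 + 2 * y1 * y4 + 2 * y1 * y5 + 2 * y1 * y6 + -2 * y1 * y7 + 2 * y1 * y8 + -4 * y1 * y9 + 2 * y1 * y10 + 4 * y1 * y11 + -4 * y1 * y12 + 2 * y1 * y14 + 2 * y1 * y17 + 4 * y1 * y18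 + -2 * y1 * y19 + 4 * y2 * y2 + 4 * y2 * y3 + 2 * y2 * y4 + 2 * y2 * y5 + -2 * y2 * y7 + 2 * y2 * y9 + -2 * y2 * y10 + 2 * y2 * y12 + -4 * y2 * y13 + 4 * y2 * y14 + 2 * y2 * y15 + 2 * y2 * y16 + -2 * y2 * y19 + 4 * y3 * y3 + 4 * y3 * y6 + 2 * y3 * y8 + -4 * y3 * y10 + -2 * y3 * y11 + -2 * y3 * y13 + 2 * y3 * y16 + -2 * y3 * y17 + 2 * y3 * y19 + 4 * y4 * y4 + -2 * y4 * y5 + 2 * y4 * y6 + -4 * y4 * y7 + 4 * y4 * y8 + 2 * y4 * y9 + -2 * y4 * y10 + 2 * y4 * y12 + 4 * y4 * y14 + 4 * y4 * y15 + -2 * y4 * y17 + -2 * y4 * y18 + 2 * y4 * y19 + 4 * y5 * y5 + 2 * y5 * y7 + -2 * y5 * y9 + 4 * y5 * y10 + 2 * y5 * y11 + 2 * y5 * y13 + 2 * y5 * y14 + 2 * y5 * y16 + 2 * y5 * y18 + -2 * y5 * y19 + 4 * y6 * y6 + -2 * y6 * y7 + 4 * y6 * y8 + -2 * y6 * y9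 + -2 * y6 * y10 + -2 * y6 * y11 + 2 * y6 * y13 + 2 * y6 * y15 + -4 * y6 * y17 + 4 * y6 * y19 + 4 * y7 * y7 + 2 * y7 * y10 + -2 * y7 * y11 + -2 * y7 * y12 + -4 * y7 * y14 + -2 * y7 * y15 + 2 * y7 * y17 + -2 * y7 * y18 + 4 * y8 * y8 + -2 * y8 * y11 + -2 * y8 * y12 + 2 * y8 * y14 + 4 * y8 * y15 + -4 * y8 * y17 + 4 * y8 * y19 + 4 * y9 * y9 + -2 * y9 * y10 + -2 * y9 * y11 + 4 * y9 * y12 + -2 * y9 * y13 + -2 * y9 * y16 + -2 * y9 * y17 + -2 * y9 * y18 + 4 * y10 * y10 + 4 * y10 * y11 + -4 * y10 * y12 + 2 * y10 * y13 + 2 * y10 * y17 + 4 * y10 * y18 + -2 * y10 * y19 + 4 * y11 * y11 + -2 * y11 * y12 + 2 * y11 * y14 + 2 * y11 * y16 + 2 * y11 * y17 + 4 * y11 * y18 + -4 * y11 * y19 + 4 * y12 * y12 + 2 * y12 * y14 + -2 * y12 * y17 + -4 * y12 * y18 + 4 * y13 * y13 + -2 * y13 * y14 + -2 * y13 * y15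 + -2 * y13 * y16 + 2 * y13 * y19 + 4 * y14 * y14 + 4 * y14 * y15 + 2 * y14 * y16 + -2 * y14 * y17 + 4 * y15 * y15 + 4 * y15 * y16 + -4 * y15 * y17 + 2 * y15 * y19 + 4 * y16 * y16 + -2 * y16 * y17 + 4 * y17 * y17 + -4 * y17 * y19 + 4 * y18 * y18 + -2 * y18 * y19 + 4 * y19 * y19 : ℤ) := ⟨_, rfl⟩
  obtain ⟨Q1, hQ1⟩ : ∃ q : ℤ, q = (15 * y1 * y1 + 12 * y1 * y2 + 12 * y1 * y3 + 10 * y1 * y4 + 6 * y1 * y5 + 10 * y1 * y6 + -10 * y1 * y7 + 10 * y1 * y8 + -14 * y1 * y9 + 4 * y1 * y10 + 14 * y1 * y11 + -14 * y1 * y12 + -4 * y1 * y13 + 10 * y1 * y14 + 4 * y1 * y15 + 4 * y1 * y16 + 4 * y1 * y17 + 14 * y1 * y18 + -6 * y1 * y19 + 12 * y2 * y2 + 8 * y2 * y3 + 4 * y2 * y4 + 12 * y2 * y5 + -4 * y2 * y6 + -4 * y2 * y7 + -4 * y2 * y8 + 4 * y2 * y9 + 4 * y2 * y11 + 4 * y2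 * y12 + -8 * y2 * y13 + 12 * y2 * y14 + 8 * y2 * y17 + 4 * y2 * y18 + -12 * y2 * y19 + 12 * y3 * y3 + -4 * y3 * y4 + 4 * y3 * y5 + 12 * y3 * y6 + 4 * y3 * y7 + 4 * y3 * y8 + -4 * y3 * y9 + -8 * y3 * y10 + -4 * y3 * y11 + -4 * y3 * y12 + -4 * y3 * y14 + -8 * y3 * y15 + 4 * y3 * y18 + 4 * y3 * y19 + 15 * y4 * y4 + -6 * y4 * y5 + 6 * y4 * y6 + -14 * y4 * y7 + 14 * y4 * y8 + 6 * y4 * y9 + -4 * y4 * y10 + 2 * y4 * y11 + 6 * y4 * y12 + 4 * y4 * y13 + 14 * y4 * y14 + 12 * y4 * y15 + -4 * y4 * y16 + -4 * y4 * y17 + -6 * y4 * y18 + 6 * y4 * y19 + 15 * y5 * y5 + 2 * y5 * y6 + 6 * y5 * y7 + 2 * y5 * y8 + -6 * y5 * y9 + 12 * y5 * y10 + 6 * y5 * y11 + 2 * y5 * y12 + 4 * y5 * y13 + 10 * y5 * y14 + 4 * y5 * y15 + 12 * y5 * y16 + -4 * y5 * y17 + 6 * y5 * y18 + -6 * y5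 * y19 + 15 * y6 * y6 + -6 * y6 * y7 + 14 * y6 * y8 + -10 * y6 * y9 + -4 * y6 * y10 + -6 * y6 * y11 + -2 * y6 * y12 + 12 * y6 * y13 + -2 * y6 * y14 + 4 * y6 * y15 + -4 * y6 * y16 + -12 * y6 * y17 + 2 * y6 * y18 + 14 * y6 * y19 + 15 * y7 * y7 + 2 * y7 * y8 + 2 * y7 * y9 + 4 * y7 * y10 + -10 * y7 * y11 + -6 * y7 * y12 + -4 * y7 * y13 + -14 * y7 * y14 + -4 * y7 * y15 + 4 * y7 * y16 + 4 * y7 * y17 + -10 * y7 * y18 + 2 * y7 * y19 + 15 * y8 * y8 + -2 * y8 * y9 + 4 * y8 * y10 + -6 * y8 * y11 + -10 * y8 * y12 + 4 * y8 * y13 + 6 * y8 * y14 + 12 * y8 * y15 + -4 * y8 * y16 + -12 * y8 * y17 + 2 * y8 * y18 + 14 * y8 * y19 + 15 * y9 * y9 + -4 * y9 * y10 + -6 * y9 * y11 + 14 * y9 * y12 + -4 * y9 * y13 + -2 * y9 * y14 + -4 * y9 * y15 + -12 * y9 * y16 + -4 * y9 * y17 + -6 * y9 * y18 + -2 * y9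 * y19 + 12 * y10 * y10 + 12 * y10 * y11 + -12 * y10 * y12 + 4 * y10 * y14 + 8 * y10 * y15 + 8 * y10 * y16 + 12 * y10 * y18 + -4 * y10 * y19 + 15 * y11 * y11 + -6 * y11 * y12 + -4 * y11 * y13 + 10 * y11 * y14 + 4 * y11 * y15 + 12 * y11 * y16 + 4 * y11 * y17 + 14 * y11 * y18 + -14 * y11 * y19 + 15 * y12 * y12 + 4 * y12 * y13 + 6 * y12 * y14 + -4 * y12 * y15 + -4 * y12 * y16 + -4 * y12 * y17 + -14 * y12 * y18 + -2 * y12 * y19 + 12 * y13 * y13 + -4 * y13 * y14 + -8 * y13 * y17 + -4 * y13 * y18 + 12 * y13 * y19 + 15 * y14 * y14 + 12 * y14 * y15 + 4 * y14 * y16 + -4 * y14 * y17 + 2 * y14 * y18 + -2 * y14 * y19 + 12 * y15 * y15 + 8 * y15 * y16 + -8 * y15 * y17 + 4 * y15 * y18 + 4 * y15 * y19 + 12 * y16 * y16 + 4 * y16 * y18 + -4 * y16 * y19 + 12 * y17 * y17 + -4 * y17 * y18 + -12 * y17 * y19 + 15 * y18 * y18 + -6 * y18 * y19 + 15 * y19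 * y19 : ℤ) := ⟨_, rfl⟩
  obtain ⟨Q2, hQ2⟩ : ∃ q : ℤ, q = (36 * y2 * y2 + 12 * y2 * y3 + 36 * y2 * y5 + -30 * y2 * y6 + -30 * y2 * y8 + 36 * y2 * y9 + -6 * y2 * y10 + -6 * y2 * y11 + 36 * y2 * y12 + -24 * y2 * y13 + 30 * y2 * y14 + -6 * y2 * y15 + -6 * y2 * y16 + 24 * y2 * y17 + -6 * y2 * y18 + -36 * y2 * y19 + 36 * y3 * y3 + -30 * y3 * y4 + 6 * y3 * y5 + 30 * y3 * y6 + 30 * y3 * y7 + 6 * y3 * y9 + -36 * y3 * y10 + -36 * y3 * y11 + 6 * y3 * y12 + 6 * y3 * y13 + -30 * y3 * y14 + -36 * y3 * y15 + -6 * y3 * y16 + -6 * y3 * y17 + -6 * y3 * y18 + 24 * y3 * y19 + 50 * y4 * y4 + -30 * y4 * y5 + 10 * y4 * y6 + -40 * y4 * y7 + 40 * y4 * y8 + 40 * y4 * y9 + -20 * y4 * y10 + -10 * y4 * y11 + 40 * y4 * y12 + 20 * y4 * y13 + 40 * y4 * y14 + 40 * y4 * y15 + -20 * y4 * y16 + -20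 * y4 * y17 + -40 * y4 * y18 + 30 * y4 * y19 + 54 * y5 * y5 + 30 * y5 * y7 + -12 * y5 * y9 + 42 * y5 * y10 + 12 * y5 * y11 + 18 * y5 * y12 + 18 * y5 * y13 + 30 * y5 * y14 + 12 * y5 * y15 + 42 * y5 * y16 + -18 * y5 * y17 + 12 * y5 * y18 + -18 * y5 * y19 + 50 * y6 * y6 + -10 * y6 * y7 + 40 * y6 * y8 + -20 * y6 * y9 + -20 * y6 * y10 + -40 * y6 * y11 + 10 * y6 * y12 + 50 * y6 * y13 + -20 * y6 * y14 + 10 * y6 * y15 + -20 * y6 * y16 + -50 * y6 * y17 + -10 * y6 * y18 + 60 * y6 * y19 + 50 * y7 * y7 + 20 * y7 * y8 + -10 * y7 * y9 + 20 * y7 * y10 + -20 * y7 * y11 + -40 * y7 * y12 + -20 * y7 * y13 + -40 * y7 * y14 + -10 * y7 * y15 + 20 * y7 * y16 + 20 * y7 * y17 + -20 * y7 * y18 + 50 * y8 * y8 + 10 * y8 * y9 + 10 * y8 * y10 + -40 * y8 * y11 + -20 * y8 * y12 + 20 * y8 * y13 + 10 * y8 * y14 + 40 * y8 * y15 + -20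 * y8 * y16 + -50 * y8 * y17 + -10 * y8 * y18 + 60 * y8 * y19 + 44 * y9 * y9 + -8 * y9 * y10 + 2 * y9 * y11 + 28 * y9 * y12 + -22 * y9 * y13 + 10 * y9 * y14 + -8 * y9 * y15 + -38 * y9 * y16 + -8 * y9 * y17 + 2 * y9 * y18 + -18 * y9 * y19 + 44 * y10 * y10 + 38 * y10 * y11 + -38 * y10 * y12 + 2 * y10 * y13 + 10 * y10 * y14 + 28 * y10 * y15 + 28 * y10 * y16 + -2 * y10 * y17 + 38 * y10 * y18 + -12 * y10 * y19 + 44 * y11 * y11 + 2 * y11 * y12 + -8 * y11 * y13 + 20 * y11 * y14 + 8 * y11 * y15 + 38 * y11 * y16 + 8 * y11 * y17 + 28 * y11 * y18 + -42 * y11 * y19 + 44 * y12 * y12 + 8 * y12 * y13 + 40 * y12 * y14 + -8 * y12 * y15 + -8 * y12 * y16 + -8 * y12 * y17 + -28 * y12 * y18 + -18 * y12 * y19 + 44 * y13 * y13 + -10 * y13 * y14 + 2 * y13 * y15 + 2 * y13 * y16 + -28 * y13 * y17 + -8 * y13 * y18 + 42 * y13 * y19 + 50 * y14 * y14 + 40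 * y14 * y15 + 10 * y14 * y16 + -20 * y14 * y17 + -10 * y14 * y18 + 44 * y15 * y15 + 28 * y15 * y16 + -32 * y15 * y17 + 8 * y15 * y18 + 18 * y15 * y19 + 44 * y16 * y16 + -2 * y16 * y17 + 8 * y16 * y18 + -12 * y16 * y19 + 44 * y17 * y17 + -22 * y17 * y18 + -42 * y17 * y19 + 44 * y18 * y18 + -12 * y18 * y19 + 54 * y19 * y19 : ℤ) := ⟨_, rfl⟩
  obtain ⟨Q3, hQ3⟩ : ∃ q : ℤ, q = (28 * y3 * y3 + -24 * y3 * y4 + 28 * y3 * y6 + 24 * y3 * y7 + 4 * y3 * y8 + -28 * y3 * y10 + -28 * y3 * y11 + 8 * y3 * y13 + -28 * y3 * y14 + -28 * y3 * y15 + -4 * y3 * y16 + -8 * y3 * y17 + -4 * y3 * y18 + 24 * y3 * y19 + 40 * y4 * y4 + -24 * y4 * y5 + 8 * y4 * y6 + -32 * y4 * y7 + 32 * y4 * y8 + 32 * y4 * y9 + -16 * y4 * y10 + -8 * y4 * y11 + 32 * y4 * y12 + 16 * y4 * y13 + 32 * y4 * y14 + 32 * y4 * y15 + -16 * y4 * y16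 + -16 * y4 * y17 + -32 * y4 * y18 + 24 * y4 * y19 + 36 * y5 * y5 + 12 * y5 * y6 + 24 * y5 * y7 + 12 * y5 * y8 + -24 * y5 * y9 + 36 * y5 * y10 + 12 * y5 * y11 + 24 * y5 * y13 + 12 * y5 * y14 + 12 * y5 * y15 + 36 * y5 * y16 + -24 * y5 * y17 + 12 * y5 * y18 + 35 * y6 * y6 + -8 * y6 * y7 + 22 * y6 * y8 + -4 * y6 * y9 + -18 * y6 * y10 + -34 * y6 * y11 + 20 * y6 * y12 + 32 * y6 * y13 + -6 * y6 * y14 + 6 * y6 * y15 + -18 * y6 * y16 + -32 * y6 * y17 + -10 * y6 * y18 + 36 * y6 * y19 + 40 * y7 * y7 + 16 * y7 * y8 + -8 * y7 * y9 + 16 * y7 * y10 + -16 * y7 * y11 + -32 * y7 * y12 + -16 * y7 * y13 + -32 * y7 * y14 + -8 * y7 * y15 + 16 * y7 * y16 + 16 * y7 * y17 + -16 * y7 * y18 + 35 * y8 * y8 + 20 * y8 * y9 + 6 * y8 * y10 + -34 * y8 * y11 + -4 * y8 * y12 + 8 * y8 * y13 + 18 * y8 * y14 + 30 * y8 * y15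 + -18 * y8 * y16 + -32 * y8 * y17 + -10 * y8 * y18 + 36 * y8 * y19 + 28 * y9 * y9 + -4 * y9 * y10 + 4 * y9 * y11 + 8 * y9 * y12 + -8 * y9 * y13 + -4 * y9 * y14 + -4 * y9 * y15 + -28 * y9 * y16 + -16 * y9 * y17 + 4 * y9 * y18 + 35 * y10 * y10 + 30 * y10 * y11 + -28 * y10 * y12 + 10 * y10 * y14 + 22 * y10 * y15 + 22 * y10 * y16 + 30 * y10 * y18 + -12 * y10 * y19 + 35 * y11 * y11 + 4 * y11 * y12 + -8 * y11 * y13 + 18 * y11 * y14 + 6 * y11 * y15 + 30 * y11 * y16 + 8 * y11 * y17 + 22 * y11 * y18 + -36 * y11 * y19 + 28 * y12 * y12 + 16 * y12 * y13 + 20 * y12 * y14 + -4 * y12 * y15 + -4 * y12 * y16 + -16 * y12 * y17 + -20 * y12 * y18 + 32 * y13 * y13 + -16 * y13 * y17 + -8 * y13 * y18 + 24 * y13 * y19 + 35 * y14 * y14 + 34 * y14 * y15 + 10 * y14 * y16 + -24 * y14 * y17 + -6 * y14 * y18 + 12 * y14 * y19 + 35 * y15 * y15 + 22 * y15 * y16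 + -24 * y15 * y17 + 6 * y15 * y18 + 12 * y15 * y19 + 35 * y16 * y16 + 6 * y16 * y18 + -12 * y16 * y19 + 32 * y17 * y17 + -16 * y17 * y18 + -24 * y17 * y19 + 35 * y18 * y18 + -12 * y18 * y19 + 36 * y19 * y19 : ℤ) := ⟨_, rfl⟩
  obtain ⟨Q4, hQ4⟩ : ∃ q : ℤ, q = (122 * y4 * y4 + -84 * y4 * y5 + 70 * y4 * y6 + -76 * y4 * y7 + 118 * y4 * y8 + 112 * y4 * y9 + -98 * y4 * y10 + -70 * y4 * y11 + 112 * y4 * y12 + 68 * y4 * y13 + 70 * y4 * y14 + 70 * y4 * y15 + -62 * y4 * y16 + -68 * y4 * y17 + -118 * y4 * y18 + 120 * y4 * y19 + 126 * y5 * y5 + 42 * y5 * y6 + 84 * y5 * y7 + 42 * y5 * y8 + -84 * y5 * y9 + 126 * y5 * y10 + 42 * y5 * y11 + 84 * y5 * y13 + 42 * y5 * y14 + 42 * y5 * y15 + 126 * y5 * y16 + -84 * y5 * y17 + 42 * y5 * y18 + 98 * y6 * y6 + -70 * y6 * y7 + 70 * y6 * y8 + -14 * y6 * y9 + -14 * y6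 * y10 + -70 * y6 * y11 + 70 * y6 * y12 + 98 * y6 * y13 + 28 * y6 * y14 + 70 * y6 * y15 + -56 * y6 * y16 + -98 * y6 * y17 + -28 * y6 * y18 + 84 * y6 * y19 + 122 * y7 * y7 + 50 * y7 * y8 + -28 * y7 * y9 + 98 * y7 * y10 + -14 * y7 * y11 + -112 * y7 * y12 + -68 * y7 * y13 + -70 * y7 * y14 + 14 * y7 * y15 + 62 * y7 * y16 + 68 * y7 * y17 + -50 * y7 * y18 + -36 * y7 * y19 + 122 * y8 * y8 + 70 * y8 * y9 + 28 * y8 * y10 + -112 * y8 * y11 + -14 * y8 * y12 + 26 * y8 * y13 + 70 * y8 * y14 + 112 * y8 * y15 + -62 * y8 * y16 + -110 * y8 * y17 + -34 * y8 * y18 + 120 * y8 * y19 + 98 * y9 * y9 + -14 * y9 * y10 + 14 * y9 * y11 + 28 * y9 * y12 + -28 * y9 * y13 + -14 * y9 * y14 + -14 * y9 * y15 + -98 * y9 * y16 + -56 * y9 * y17 + 14 * y9 * y18 + 98 * y10 * y10 + 56 * y10 * y11 + -98 * y10 * y12 + 14 * y10 * y13 + -14 * y10 * y14 + 28 * y10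 * y15 + 70 * y10 * y16 + -14 * y10 * y17 + 98 * y10 * y18 + 98 * y11 * y11 + 14 * y11 * y12 + -14 * y11 * y13 + 14 * y11 * y14 + -28 * y11 * y15 + 98 * y11 * y16 + 14 * y11 * y17 + 70 * y11 * y18 + -84 * y11 * y19 + 98 * y12 * y12 + 56 * y12 * y13 + 70 * y12 * y14 + -14 * y12 * y15 + -14 * y12 * y16 + -56 * y12 * y17 + -70 * y12 * y18 + 110 * y13 * y13 + 14 * y13 * y14 + 14 * y13 * y15 + 2 * y13 * y16 + -52 * y13 * y17 + -26 * y13 * y18 + 72 * y13 * y19 + 98 * y14 * y14 + 70 * y14 * y15 + 28 * y14 * y16 + -98 * y14 * y17 + -28 * y14 * y18 + 84 * y14 * y19 + 98 * y15 * y15 + 70 * y15 * y16 + -98 * y15 * y17 + 14 * y15 * y18 + 84 * y15 * y19 + 122 * y16 * y16 + -2 * y16 * y17 + 20 * y16 * y18 + -36 * y16 * y19 + 110 * y17 * y17 + -58 * y17 * y18 + -72 * y17 * y19 + 122 * y18 * y18 + -36 * y18 * y19 + 108 * y19 * y19 : ℤ) := ⟨_, rfl⟩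
  obtain ⟨Q5, hQ5⟩ : ∃ q : ℤ, q = (648 * y5 * y5 + 384 * y5 * y6 + 336 * y5 * y7 + 480 * y5 * y8 + -264 * y5 * y9 + 536 * y5 * y10 + 104 * y5 * y11 + 224 * y5 * y12 + 624 * y5 * y13 + 384 * y5 * y14 + 384 * y5 * y15 + 608 * y5 * y16 + -624 * y5 * y17 + 8 * y5 * y18 + 240 * y5 * y19 + 511 * y6 * y6 + -280 * y6 * y7 + 210 * y6 * y8 + -268 * y6 * y9 + 82 * y6 * y10 + -290 * y6 * y11 + 220 * y6 * y12 + 456 * y6 * y13 + 46 * y6 * y14 + 290 * y6 * y15 + -222 * y6 * y16 + -456 * y6 * y17 + 34 * y6 * y18 + 288 * y6 * y19 + 640 * y7 * y7 + 504 * y7 * y8 + 40 * y7 * y9 + 392 * y7 * y10 + -208 * y7 * y11 + -448 * y7 * y12 + -272 * y7 * y13 + -280 * y7 * y14 + 208 * y7 * y15 + 248 * y7 * y16 + 272 * y7 * y17 + -504 * y7 * y18 + 8 * y7 * y19 + 543 * y8 * y8 + 92 * y8 * y9 + 438 * y8 * y10 + -454 * y8 * y11 + -396 * y8 * y12 + -40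 * y8 * y13 + 210 * y8 * y14 + 454 * y8 * y15 + -186 * y8 * y16 + -448 * y8 * y17 + 134 * y8 * y18 + 360 * y8 * y19 + 420 * y9 * y9 + 180 * y9 * y10 + 268 * y9 * y11 + -136 * y9 * y12 + -344 * y9 * y13 + -268 * y9 * y14 + -268 * y9 * y15 + -404 * y9 * y16 + -144 * y9 * y17 + 396 * y9 * y18 + -320 * y9 * y19 + 455 * y10 * y10 + 162 * y10 * y11 + -308 * y10 * y12 + 240 * y10 * y13 + 82 * y10 * y14 + 326 * y10 * y15 + 262 * y10 * y16 + -240 * y10 * y17 + 294 * y10 * y18 + 280 * y10 * y19 + 511 * y11 * y11 + 268 * y11 * y12 + 32 * y11 * y13 + 198 * y11 * y14 + -46 * y11 * y15 + 466 * y11 * y16 + -32 * y11 * y17 + 210 * y11 * y18 + -288 * y11 * y19 + 420 * y12 * y12 + 144 * y12 * y13 + 220 * y12 * y14 + -268 * y12 * y15 + 84 * y12 * y16 + -144 * y12 * y17 + -92 * y12 * y18 + -320 * y12 * y19 + 584 * y13 * y13 + -32 * y13 * y14 + -32 * y13 * y15 + 112 * y13 * y16 + -192 * y13 * y17 + 40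 * y13 * y18 + 224 * y13 * y19 + 511 * y14 * y14 + 290 * y14 * y15 + 266 * y14 * y16 + -456 * y14 * y17 + 34 * y14 * y18 + 288 * y14 * y19 + 511 * y15 * y15 + 510 * y15 * y16 + -456 * y15 * y17 + 278 * y15 * y18 + 288 * y15 * y19 + 663 * y16 * y16 + -112 * y16 * y17 + -58 * y16 * y18 + -32 * y16 * y19 + 584 * y17 * y17 + -528 * y17 * y18 + -224 * y17 * y19 + 543 * y18 * y18 + 128 * y18 * y19 + 456 * y19 * y19 : ℤ) := ⟨_, rfl⟩
  obtain ⟨Q6, hQ6⟩ : ∃ q : ℤ, q = (603 * y6 * y6 + -504 * y6 * y7 + 90 * y6 * y8 + -252 * y6 * y9 + -102 * y6 * y10 + -426 * y6 * y11 + 204 * y6 * y12 + 360 * y6 * y13 + -90 * y6 * y14 + 234 * y6 * y15 + -534 * y6 * y16 + -360 * y6 * y17 + 42 * y6 * y18 + 288 * y6 * y19 + 792 * y7 * y7 + 504 * y7 * y8 + 144 * y7 * y9 + 336 * y7 * y10 + -312 * y7 * y11 + -672 * y7 * y12 + -576 * y7 * y13 + -504 * y7 * y14 + 144 * y7 * y15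 + 120 * y7 * y16 + 576 * y7 * y17 + -672 * y7 * y18 + -72 * y7 * y19 + 603 * y8 * y8 + 252 * y8 * y9 + 318 * y8 * y10 + -654 * y8 * y11 + -636 * y8 * y12 + -360 * y8 * y13 + 90 * y8 * y14 + 414 * y8 * y15 + -546 * y8 * y16 + -288 * y8 * y17 + 174 * y8 * y18 + 360 * y8 * y19 + 522 * y9 * y9 + 384 * y9 * y10 + 384 * y9 * y11 + -120 * y9 * y12 + -288 * y9 * y13 + -252 * y9 * y14 + -252 * y9 * y15 + -372 * y9 * y16 + -360 * y9 * y17 + 528 * y9 * y18 + -360 * y9 * y19 + 457 * y10 * y10 + 158 * y10 * y11 + -532 * y10 * y12 + -24 * y10 * y13 + -102 * y10 * y14 + 222 * y10 * y15 + 14 * y10 * y16 + 24 * y10 * y17 + 386 * y10 * y18 + 240 * y10 * y19 + 673 * y11 * y11 + 332 * y11 * y12 + -24 * y11 * y13 + 222 * y11 * y14 + -102 * y11 * y15 + 554 * y11 * y16 + 24 * y11 * y17 + 278 * y11 * y18 + -408 * y11 * y19 + 532 * y12 * y12 + 48 * y12 * y13 + 204 * y12 * y14 + -444 * y12 * y15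 + -28 * y12 * y16 + -48 * y12 * y17 + -124 * y12 * y18 + -480 * y12 * y19 + 576 * y13 * y13 + -288 * y13 * y14 + -288 * y13 * y15 + -240 * y13 * y16 + 144 * y13 * y17 + 48 * y13 * y18 + 144 * y13 * y19 + 603 * y14 * y14 + 234 * y14 * y15 + 114 * y14 * y16 + -360 * y14 * y17 + 42 * y14 * y18 + 288 * y14 * y19 + 603 * y15 * y15 + 438 * y15 * y16 + -360 * y15 * y17 + 366 * y15 * y18 + 288 * y15 * y19 + 691 * y16 * y16 + 240 * y16 * y17 + -82 * y16 * y18 + -192 * y16 * y19 + 576 * y17 * y17 + -696 * y17 * y18 + -144 * y17 * y19 + 721 * y18 * y18 + 168 * y18 * y19 + 576 * y19 * y19 : ℤ) := ⟨_, rfl⟩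
  obtain ⟨Q7, hQ7⟩ : ∃ q : ℤ, q = (2556 * y7 * y7 + 2016 * y7 * y8 + 144 * y7 * y9 + 1092 * y7 * y10 + -1824 * y7 * y11 + -2184 * y7 * y12 + -1584 * y7 * y13 + -2016 * y7 * y14 + 900 * y7 * y15 + -384 * y7 * y16 + 1584 * y7 * y17 + -2436 * y7 * y18 + 180 * y7 * y19 + 2232 * y8 * y8 + 1008 * y8 * y9 + 1212 * y8 * y10 + -2316 * y8 * y11 + -2424 * y8 * y12 + -1440 * y8 * y13 + 360 * y8 * y14 + 1476 * y8 * y15 + -1884 * y8 * y16 + -972 * y8 * y17 + 636 * y8 * y18 + 1260 * y8 * y19 + 1845 * y9 * y9 + 1350 * y9 * y10 + 1098 * y9 * y11 + -288 * y9 * y12 + -792 * y9 * y13 + -1008 * y9 * y14 + -756 * y9 * y15 + -1800 * y9 * y16 + -1620 * y9 * y17 + 1998 * y9 * y18 + -1116 * y9 * y19 + 1685 * y10 * y10 + 454 * y10 * y11 + -1916 * y10 * y12 + 24 * y10 * y13 + -408 * y10 * y14 + 900 * y10 * y15 + -116 * y10 * y16 + -24 * y10 * y17 + 1450 * y10 *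 y18 + 984 * y10 * y19 + 2225 * y11 * y11 + 1504 * y11 * y12 + 384 * y11 * y13 + 708 * y11 * y14 + -72 * y11 * y15 + 1360 * y11 * y16 + -384 * y11 * y17 + 1090 * y11 * y18 + -1140 * y11 * y19 + 1916 * y12 * y12 + -48 * y12 * y13 + 816 * y12 * y14 + -1800 * y12 * y15 + 232 * y12 * y16 + 48 * y12 * y17 + -488 * y12 * y18 + -1968 * y12 * y19 + 1944 * y13 * y13 + -972 * y13 * y14 + -1332 * y13 * y15 + -300 * y13 * y16 + 936 * y13 * y17 + 132 * y13 * y18 + 216 * y13 * y19 + 2232 * y14 * y14 + 936 * y14 * y15 + 276 * y14 * y16 + -1440 * y14 * y17 + 168 * y14 * y18 + 1152 * y14 * y19 + 2160 * y15 * y15 + 2016 * y15 * y16 + -1080 * y15 * y17 + 1332 * y15 * y18 + 864 * y15 * y19 + 2132 * y16 * y16 + 300 * y16 * y17 + -236 * y16 * y18 + -240 * y16 * y19 + 1944 * y17 * y17 + -2544 * y17 * y18 + -216 * y17 * y19 + 2681 * y18 * y18 + 588 * y18 * y19 + 2016 * y19 * y19 : ℤ) := ⟨_, rfl⟩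
  obtain ⟨Q8, hQ8⟩ : ∃ q : ℤ, q = (648 * y8 * y8 + 336 * y8 * y9 + 276 * y8 * y10 + -564 * y8 * y11 + -552 * y8 * y12 + -288 * y8 * y13 + 408 * y8 * y14 + 396 * y8 * y15 + -612 * y8 * y16 + -564 * y8 * y17 + 564 * y8 * y18 + 420 * y8 * y19 + 651 * y9 * y9 + 466 * y9 * y10 + 406 * y9 * y11 + -80 * y9 * y12 + -264 * y9 * y13 + -336 * y9 * y14 + -276 * y9 * y15 + -632 * y9 * y16 + -588 * y9 * y17 + 730 * y9 * y18 + -396 * y9 * y19 + 554 * y10 * y10 + 298 * y10 * y11 + -512 * y10 * y12 + 128 * y10 * y13 + 8 * y10 * y14 + 250 * y10 * y15 + -12 * y10 * y16 + -128 * y10 * y17 + 696 * y10 * y18 + 334 * y10 * y19 + 671 * y11 * y11 + 256 * y11 * y12 + -64 * y11 * y13 + -4 * y11 * y14 + 88 * y11 * y15 + 432 * y11 * y16 + 64 * y11 * y17 + 78 * y11 * y18 + -380 * y11 * y19 + 512 * y12 * y12 + -256 * y12 * y13 + -16 * y12 * y14 + -500 * y12 * y15 + 24 * y12 * y16 + 256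 * y12 * y17 + -540 * y12 * y18 + -668 * y12 * y19 + 600 * y13 * y13 + -564 * y13 * y14 + -372 * y13 * y15 + -148 * y13 * y16 + 504 * y13 * y17 + -220 * y13 * y18 + 96 * y13 * y19 + 648 * y14 * y14 + 456 * y14 * y15 + 44 * y14 * y16 + -288 * y14 * y17 + -280 * y14 * y18 + 432 * y14 * y19 + 735 * y15 * y15 + 736 * y15 * y16 + -480 * y15 * y17 + 622 * y15 * y18 + 294 * y15 * y19 + 748 * y16 * y16 + 148 * y16 * y17 + -148 * y16 * y18 + -80 * y16 * y19 + 600 * y17 * y17 + -632 * y17 * y18 + -96 * y17 * y19 + 742 * y18 * y18 + 238 * y18 * y19 + 711 * y19 * y19 : ℤ) := ⟨_, rfl⟩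
  obtain ⟨Q9, hQ9⟩ : ∃ q : ℤ, q = (154 * y9 * y9 + 100 * y9 * y10 + 140 * y9 * y11 + 16 * y9 * y12 + -48 * y9 * y13 + -112 * y9 * y14 + -96 * y9 * y15 + -120 * y9 * y16 + -112 * y9 * y17 + 148 * y9 * y18 + -128 * y9 * y19 + 133 * y10 * y10 + 106 * y10 * y11 + -100 * y10 * y12 + 48 * y10 * y13 + -20 * y10 * y14 + 42 * y10 * y15 + 30 * y10 * y16 + -2 * y10 * y17 + 146 * y10 * y18 + 62 * y10 * y19 + 139 * y11 * y11 + 4 * y11 * y12 + -48 * y11 * y13 + 44 * y11 * y14 + 66 * y11 * y15 + 42 * y11 * y16 + -46 * y11 * y17 + 82 * y11 * y18 + -50 * y11 * y19 + 100 * y12 * y12 + -96 * y12 * y13 + 40 * y12 * y14 + -84 * y12 * y15 + -60 * y12 * y16 + 4 * y12 * y17 + -76 * y12 * y18 + -124 * y12 * y19 + 144 * y13 * y13 + -120 * y13 * y14 + -72 * y13 * y15 + -72 * y13 * y16 + 96 * y13 * y17 + -24 * y13 * y18 + 48 * y13 * y19 + 148 * y14 * y14 + 84 * y14 * y15 + 60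 * y14 * y16 + -28 * y14 * y17 + -116 * y14 * y18 + 76 * y14 * y19 + 171 * y15 * y15 + 234 * y15 * y16 + -78 * y15 * y17 + 114 * y15 * y18 + 42 * y15 * y19 + 153 * y16 * y16 + -30 * y16 * y17 + 30 * y16 * y18 + 30 * y16 * y19 + 121 * y17 * y17 + -98 * y17 * y18 + 22 * y17 * y19 + 157 * y18 * y18 + 14 * y18 * y19 + 163 * y19 * y19 : ℤ) := ⟨_, rfl⟩
  obtain ⟨Q10, hQ10⟩ : ∃ q : ℤ, q = (999 * y10 * y10 + 518 * y10 * y11 + -900 * y10 * y12 + 544 * y10 * y13 + 140 * y10 * y14 + 626 * y10 * y15 + 590 * y10 * y16 + 294 * y10 * y17 + 838 * y10 * y18 + 886 * y10 * y19 + 917 * y11 * y11 + -28 * y11 * y12 + -224 * y11 * y13 + 812 * y11 * y14 + 938 * y11 * y15 + 826 * y11 * y16 + 42 * y11 * y17 + 126 * y11 * y18 + 70 * y11 * y19 + 852 * y12 * y12 + -800 * y12 * y13 + 392 * y12 * y14 + -676 * y12 * y15 + -460 * y12 * y16 + 84 * y12 * y17 + -716 * y12 * y18 + -1004 * y12 *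 y19 + 1200 * y13 * y13 + -1176 * y13 * y14 + -744 * y13 * y15 + -776 * y13 * y16 + 672 * y13 * y17 + -8 * y13 * y18 + 240 * y13 * y19 + 1092 * y14 * y14 + 420 * y14 * y15 + 140 * y14 * y16 + -588 * y14 * y17 + -532 * y14 * y18 + 252 * y14 * y19 + 1335 * y15 * y15 + 1682 * y15 * y16 + -966 * y15 * y17 + 1370 * y15 * y18 + 18 * y15 * y19 + 1109 * y16 * y16 + -630 * y16 * y17 + 750 * y16 * y18 + -170 * y16 * y19 + 861 * y17 * y17 + -378 * y17 * y18 + -210 * y17 * y19 + 1039 * y18 * y18 + 646 * y18 * y19 + 1167 * y19 * y19 : ℤ) := ⟨_, rfl⟩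
  obtain ⟨Q11, hQ11⟩ : ∃ q : ℤ, q = (5513 * y11 * y11 + 1332 * y11 * y12 + -2368 * y11 * y13 + 5032 * y11 * y14 + 5032 * y11 * y15 + 4366 * y11 * y16 + -222 * y11 * y17 + -592 * y11 * y18 + -1036 * y11 * y19 + 4212 * y12 * y12 + -3600 * y12 * y13 + 2952 * y12 * y14 + -2556 * y12 * y15 + -1260 * y12 * y16 + 1404 * y12 * y17 + -2196 * y12 * y18 + -3924 * y12 * y19 + 7304 * y13 * y13 + -7876 * y13 * y14 + -5932 * y13 * y15 + -6076 * y13 * y16 + 3840 * y13 * y17 + -1532 * y13 * y18 + -8 * y13 * y19 + 7052 * y14 * y14 + 2440 * y14 * y15 + 640 * y14 * y16 + -3948 * y14 * y17 + -3832 * y14 * y18 + 1232 * y14 * y19 + 8024 * y15 * y15 + 9712 * y15 * y16 + -6864 * y15 * y17 + 7184 * y15 * y18 + -1684 * y15 * y19 + 6629 * y16 * y16 + -4650 * y16 * y17 + 3260 * y16 * y18 + -2800 * y16 * y19 + 5445 * y17 * y17 + -3252 * y17 * y18 + -2208 * y17 * y19 + 5600 * y18 * y18 + 1780 * y18 * y19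 + 6296 * y19 * y19 : ℤ) := ⟨_, rfl⟩
  obtain ⟨Q12, hQ12⟩ : ∃ q : ℤ, q = (3800 * y12 * y12 + -3048 * y12 * y13 + 2156 * y12 * y14 + -2910 * y12 * y15 + -1644 * y12 * y16 + 1316 * y12 * y17 + -1954 * y12 * y18 + -3494 * y12 * y19 + 6484 * y13 * y13 + -6250 * y13 * y14 + -4462 * y13 * y15 + -4726 * y13 * y16 + 3488 * y13 * y17 + -1526 * y13 * y18 + -212 * y13 * y19 + 5430 * y14 * y14 + 132 * y14 * y15 + -1244 * y14 * y16 + -3538 * y14 * y17 + -3276 * y14 * y18 + 1568 * y14 * y19 + 6324 * y15 * y15 + 7100 * y15 * y16 + -6220 * y15 * y17 + 6856 * y15 * y18 + -1114 * y15 * y19 + 5302 * y16 * y16 + -4196 * y16 * y17 + 3214 * y16 * y18 + -2198 * y16 * y19 + 5006 * y17 * y17 + -3002 * y17 * y18 + -2050 * y17 * y19 + 5136 * y18 * y18 + 1586 * y18 * y19 + 5746 * y19 * y19 : ℤ) := ⟨_, rfl⟩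
  obtain ⟨Q13, hQ13⟩ : ∃ q : ℤ, q = (4048 * y13 * y13 + -3712 * y13 * y14 + -3880 * y13 * y15 + -3712 * y13 * y16 + 2768 * y13 * y17 + -1592 * y13 * y18 + -1112 * y13 * y19 + 3532 * y14 * y14 + 660 * y14 * y15 + -536 * y14 * y16 + -2696 * y14 * y17 + -1876 * y14 * y18 + 1764 * y14 * y19 + 3975 * y15 * y15 + 4460 * y15 * y16 + -3940 * y15 * y17 + 4210 * y15 * y18 + -1690 * y15 * y19 + 3532 * y16 * y16 + -2696 * y16 * y17 + 1924 * y16 * y18 + -2036 * y16 * y19 + 3372 * y17 * y17 + -1836 * y17 * y18 + -996 * y17 * y19 + 3367 * y18 * y18 + 474 * y18 * y19 + 3407 * y19 * y19 : ℤ) := ⟨_, rfl⟩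
  obtain ⟨Q14, hQ14⟩ : ∃ q : ℤ, q = (714 * y14 * y14 + -298 * y14 * y15 + -596 * y14 * y16 + -380 * y14 * y17 + -694 * y14 * y18 + 334 * y14 * y19 + 811 * y15 * y15 + 714 * y15 * y16 + -696 * y15 * y17 + 918 * y15 * y18 + -592 * y15 * y19 + 714 * y16 * y16 + -380 * y16 * y17 + 318 * y16 * y18 + -678 * y16 * y19 + 772 * y17 * y17 + -344 * y17 * y18 + -164 * y17 * y19 + 855 * y18 * y18 + 68 * y18 * y19 + 887 * y19 * y19 : ℤ) := ⟨_, rfl⟩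
  obtain ⟨Q15, hQ15⟩ : ∃ q : ℤ, q = (2201 * y15 * y15 + 1664 * y15 * y16 + -2188 * y15 * y17 + 2182 * y15 * y18 + -1474 * y15 * y19 + 1664 * y16 * y16 + -1520 * y16 * y17 + 80 * y16 * y18 + -1520 * y16 * y19 + 2036 * y17 * y17 + -1492 * y17 * y18 + -212 * y17 * y19 + 1937 * y18 * y18 + 650 * y18 * y19 + 2393 * y19 * y19 : ℤ) := ⟨_, rfl⟩
  obtain ⟨Q16, hQ16⟩ : ∃ q : ℤ, q = (1040 * y16 * y16 + -534 * y16 * y17 + -574 * y16 * y18 + -742 * y16 * y19 + 1150 * y17 * y17 + -314 * y17 * y18 + -728 * y17 * y19 + 1076 * y18 * y18 + 1064 * y18 * y19 + 1654 * y19 * y19 : ℤ) := ⟨_, rfl⟩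
  obtain ⟨Q17, hQ17⟩ : ∃ q : ℤ, q = (511 * y17 * y17 + -218 * y17 * y18 + -434 * y17 * y19 + 471 * y18 * y18 + 406 * y18 * y19 + 719 * y19 * y19 : ℤ) := ⟨_, rfl⟩
  obtain ⟨Q18, hQ18⟩ : ∃ q : ℤ, q = (20 * y18 * y18 + 14 * y18 * y19 + 28 * y19 * y19 : ℤ) := ⟨_, rfl⟩
  obtain ⟨Q19, hQ19⟩ : ∃ q : ℤ, q = (1 * y19 * y19 : ℤ) := ⟨_, rfl⟩
  obtain ⟨Q20, hQ20⟩ : ∃ q : ℤ, q = (0 : ℤ) := ⟨_, rfl⟩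
  obtain ⟨F0, hF0⟩ : ∃ f : ℤ, f = (4 * y0 + -1 * y1 + 2 * y2 + 2 * y3 + 1 * y4 + -1 * y5 + 1 * y6 + -1 * y7 + 1 * y8 + 1 * y9 + -2 * y10 + -1 * y11 + 1 * y12 + -2 * y13 + 1 * y14 + 2 * y15 + 2 * y16 + -2 * y17 + -1 * y18 + 1 * y19 : ℤ) := ⟨_, rfl⟩
  obtain ⟨F1, hF1⟩ : ∃ f : ℤ, f = (15 * y1 + 6 * y2 + 6 * y3 + 5 * y4 + 3 * y5 + 5 * y6 + -5 * y7 + 5 * y8 + -7 * y9 + 2 * y10 + 7 * y11 + -7 * y12 + -2 * y13 + 5 * y14 + 2 * y15 + 2 * y16 + 2 * y17 + 7 * y18 + -3 * y19 : ℤ) := ⟨_, rfl⟩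
  obtain ⟨F2, hF2⟩ : ∃ f : ℤ, f = (36 * y2 + 6 * y3 + 18 * y5 + -15 * y6 + -15 * y8 + 18 * y9 + -3 * y10 + -3 * y11 + 18 * y12 + -12 * y13 + 15 * y14 + -3 * y15 + -3 * y16 + 12 * y17 + -3 * y18 + -18 * y19 : ℤ) := ⟨_, rfl⟩
  obtain ⟨F3, hF3⟩ : ∃ f : ℤ, f = (28 * y3 + -12 * y4 + 14 * y6 + 12 * y7 + 2 * y8 + -14 * y10 + -14 * y11 + 4 * y13 + -14 * y14 + -14 * y15 + -2 * y16 + -4 * y17 + -2 * y18 + 12 * y19 : ℤ) := ⟨_, rfl⟩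
  obtain ⟨F4, hF4⟩ : ∃ f : ℤ, f = (122 * y4 + -42 * y5 + 35 * y6 + -38 * y7 + 59 * y8 + 56 * y9 + -49 * y10 + -35 * y11 + 56 * y12 + 34 * y13 + 35 * y14 + 35 * y15 + -31 * y16 + -34 * y17 + -59 * y18 + 60 * y19 : ℤ) := ⟨_, rfl⟩
  obtain ⟨F5, hF5⟩ : ∃ f : ℤ, f = (648 * y5 + 192 * y6 + 168 * y7 + 240 * y8 + -132 * y9 + 268 * y10 + 52 * y11 + 112 * y12 + 312 * y13 + 192 * y14 + 192 * y15 + 304 * y16 + -312 * y17 + 4 * y18 + 120 * y19 : ℤ) := ⟨_, rfl⟩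
  obtain ⟨F6, hF6⟩ : ∃ f : ℤ, f = (603 * y6 + -252 * y7 + 45 * y8 + -126 * y9 + -51 * y10 + -213 * y11 + 102 * y12 + 180 * y13 + -45 * y14 + 117 * y15 + -267 * y16 + -180 * y17 + 21 * y18 + 144 * y19 : ℤ) := ⟨_, rfl⟩
  obtain ⟨F7, hF7⟩ : ∃ f : ℤ, f = (2556 * y7 + 1008 * y8 + 72 * y9 + 546 * y10 + -912 * y11 + -1092 * y12 + -792 * y13 + -1008 * y14 + 450 * y15 + -192 * y16 + 792 * y17 + -1218 * y18 + 90 * y19 : ℤ) := ⟨_, rfl⟩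
  obtain ⟨F8, hF8⟩ : ∃ f : ℤ, f = (648 * y8 + 168 * y9 + 138 * y10 + -282 * y11 + -276 * y12 + -144 * y13 + 204 * y14 + 198 * y15 + -306 * y16 + -282 * y17 + 282 * y18 + 210 * y19 : ℤ) := ⟨_, rfl⟩
  obtain ⟨F9, hF9⟩ : ∃ f : ℤ, f = (154 * y9 + 50 * y10 + 70 * y11 + 8 * y12 + -24 * y13 + -56 * y14 + -48 * y15 + -60 * y16 + -56 * y17 + 74 * y18 + -64 * y19 : ℤ) := ⟨_, rfl⟩
  obtain ⟨F10, hF10⟩ : ∃ f : ℤ, f = (999 * y10 + 259 * y11 + -450 * y12 + 272 * y13 + 70 * y14 + 313 * y15 + 295 * y16 + 147 * y17 + 419 * y18 + 443 * y19 : ℤ) := ⟨_, rfl⟩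
  obtain ⟨F11, hF11⟩ : ∃ f : ℤ, f = (5513 * y11 + 666 * y12 + -1184 * y13 + 2516 * y14 + 2516 * y15 + 2183 * y16 + -111 * y17 + -296 * y18 + -518 * y19 : ℤ) := ⟨_, rfl⟩
  obtain ⟨F12, hF12⟩ : ∃ f : ℤ, f = (3800 * y12 + -1524 * y13 + 1078 * y14 + -1455 * y15 + -822 * y16 + 658 * y17 + -977 * y18 + -1747 * y19 : ℤ) := ⟨_, rfl⟩
  obtain ⟨F13, hF13⟩ : ∃ f : ℤ, f = (4048 * y13 + -1856 * y14 + -1940 * y15 + -1856 * y16 + 1384 * y17 + -796 * y18 + -556 * y19 : ℤ) := ⟨_, rfl⟩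
  obtain ⟨F14, hF14⟩ : ∃ f : ℤ, f = (714 * y14 + -149 * y15 + -298 * y16 + -190 * y17 + -347 * y18 + 167 * y19 : ℤ) := ⟨_, rfl⟩
  obtain ⟨F15, hF15⟩ : ∃ f : ℤ, f = (2201 * y15 + 832 * y16 + -1094 * y17 + 1091 * y18 + -737 * y19 : ℤ) := ⟨_, rfl⟩
  obtain ⟨F16, hF16⟩ : ∃ f : ℤ, f = (1040 * y16 + -267 * y17 + -287 * y18 + -371 * y19 : ℤ) := ⟨_, rfl⟩
  obtain ⟨F17, hF17⟩ : ∃ f : ℤ, f = (511 * y17 + -109 * y18 + -217 * y19 : ℤ) := ⟨_, rfl⟩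
  obtain ⟨F18, hF18⟩ : ∃ f : ℤ, f = (20 * y18 + 7 * y19 : ℤ) := ⟨_, rfl⟩
  obtain ⟨F19, hF19⟩ : ∃ f : ℤ, f = (1 * y19 : ℤ) := ⟨_, rfl⟩
  have h0 : ![y0, y1, y2, y3, y4, y5, y6, y7, y8, y9, y10, y11, y12, y13, y14, y15, y16, y17, y18, y19] ⬝ᵥ S11.mulVec ![y0, y1, y2, y3, y4, y5, y6, y7, y8, y9, y10, y11, y12, y13, y14, y15, y16, y17, y18, y19] = -Q0 := by
    rw [hQ0]
    simp only [S11, Matrix.cons_mulVec, Matrix.empty_mulVec, Matrix.cons_dotProduct, Matrix.dotProduct_of_isEmpty, Matrix.head_cons, Matrix.tail_cons]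
    ring
  have step0 : (4:ℤ) * Q0 = F0^2 + (1:ℤ) * Q1 := by rw [hQ0, hQ1, hF0]; ring
  have step1 : (15:ℤ) * Q1 = F1^2 + (4:ℤ) * Q2 := by rw [hQ1, hQ2, hF1]; ring
  have step2 : (36:ℤ) * Q2 = F2^2 + (45:ℤ) * Q3 := by rw [hQ2, hQ3, hF2]; ring
  have step3 : (28:ℤ) * Q3 = F3^2 + (8:ℤ) * Q4 := by rw [hQ3, hQ4, hF3]; ring
  have step4 : (122:ℤ) * Q4 = F4^2 + (21:ℤ) * Q5 := by rw [hQ4, hQ5, hF4]; ring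
  have step5 : (648:ℤ) * Q5 = F5^2 + (488:ℤ) * Q6 := by rw [hQ5, hQ6, hF5]; ring
  have step6 : (603:ℤ) * Q6 = F6^2 + (162:ℤ) * Q7 := by rw [hQ6, hQ7, hF6]; ring
  have step7 : (2556:ℤ) * Q7 = F7^2 + (7236:ℤ) * Q8 := by rw [hQ7, hQ8, hF7]; ring
  have step8 : (648:ℤ) * Q8 = F8^2 + (2556:ℤ) * Q9 := by rw [hQ8, hQ9, hF8]; ring
  have step9 : (154:ℤ) * Q9 = F9^2 + (18:ℤ) * Q10 := by rw [hQ9, hQ10, hF9]; ring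
  have step10 : (999:ℤ) * Q10 = F10^2 + (154:ℤ) * Q11 := by rw [hQ10, hQ11, hF10]; ring
  have step11 : (5513:ℤ) * Q11 = F11^2 + (5994:ℤ) * Q12 := by rw [hQ11, hQ12, hF11]; ring
  have step12 : (3800:ℤ) * Q12 = F12^2 + (5513:ℤ) * Q13 := by rw [hQ12, hQ13, hF12]; ring
  have step13 : (4048:ℤ) * Q13 = F13^2 + (15200:ℤ) * Q14 := by rw [hQ13, hQ14, hF13]; ring
  have step14 : (714:ℤ) * Q14 = F14^2 + (253:ℤ) * Q15 := by rw [hQ14, hQ15, hF14]; ring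
  have step15 : (2201:ℤ) * Q15 = F15^2 + (2856:ℤ) * Q16 := by rw [hQ15, hQ16, hF15]; ring
  have step16 : (1040:ℤ) * Q16 = F16^2 + (2201:ℤ) * Q17 := by rw [hQ16, hQ17, hF16]; ring
  have step17 : (511:ℤ) * Q17 = F17^2 + (11440:ℤ) * Q18 := by rw [hQ17, hQ18, hF17]; ring
  have step18 : (20:ℤ) * Q18 = F18^2 + (511:ℤ) * Q19 := by rw [hQ18, hQ19, hF18]; ring
  have step19 : (1:ℤ) * Q19 = F19^2 + (1:ℤ) * Q20 := by rw [hQ19, hQ20, hF19]; ring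
  have nn20 : (0:ℤ) ≤ Q20 := le_of_eq hQ20.symm
  have nn19 : (0:ℤ) ≤ Q19 := by linarith only [step19, nn20, sq_nonneg F19]
  have nn18 : (0:ℤ) ≤ Q18 := by linarith only [step18, nn19, sq_nonneg F18]
  have nn17 : (0:ℤ) ≤ Q17 := by linarith only [step17, nn18, sq_nonneg F17]
  have nn16 : (0:ℤ) ≤ Q16 := by linarith only [step16, nn17, sq_nonneg F16]
  have nn15 : (0:ℤ) ≤ Q15 := by linarith only [step15, nn16, sq_nonneg F15]
  have nn14 : (0:ℤ) ≤ Q14 := by linarith only [step14, nn15, sq_nonneg F14]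
  have nn13 : (0:ℤ) ≤ Q13 := by linarith only [step13, nn14, sq_nonneg F13]
  have nn12 : (0:ℤ) ≤ Q12 := by linarith only [step12, nn13, sq_nonneg F12]
  have nn11 : (0:ℤ) ≤ Q11 := by linarith only [step11, nn12, sq_nonneg F11]
  have nn10 : (0:ℤ) ≤ Q10 := by linarith only [step10, nn11, sq_nonneg F10]
  have nn9 : (0:ℤ) ≤ Q9 := by linarith only [step9, nn10, sq_nonneg F9]
  have nn8 : (0:ℤ) ≤ Q8 := by linarith only [step8, nn9, sq_nonneg F8]
  have nn7 : (0:ℤ) ≤ Q7 := by linarith only [step7, nn8, sq_nonneg F7]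
  have nn6 : (0:ℤ) ≤ Q6 := by linarith only [step6, nn7, sq_nonneg F6]
  have nn5 : (0:ℤ) ≤ Q5 := by linarith only [step5, nn6, sq_nonneg F5]
  have nn4 : (0:ℤ) ≤ Q4 := by linarith only [step4, nn5, sq_nonneg F4]
  have nn3 : (0:ℤ) ≤ Q3 := by linarith only [step3, nn4, sq_nonneg F3]
  have nn2 : (0:ℤ) ≤ Q2 := by linarith only [step2, nn3, sq_nonneg F2]
  have nn1 : (0:ℤ) ≤ Q1 := by linarith only [step1, nn2, sq_nonneg F1]
  have nn0 : (0:ℤ) ≤ Q0 := by linarith only [step0, nn1, sq_nonneg F0]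
  rcases lt_or_eq_of_le nn0 with h|h
  · rw [h0]; exact neg_neg_of_pos h
  exfalso
  have hz0 : Q0 = 0 := h.symm
  have hsq0 : F0^2 = 0 := by linarith only [step0, hz0, nn1, sq_nonneg F0]
  have e0 := pow_eq_zero_iff (n := 2) (by norm_num) |>.mp hsq0
  have hz1 : Q1 = 0 := by linarith only [step0, hz0, hsq0]
  rw [hF0] at e0
  have hsq1 : F1^2 = 0 := by linarith only [step1, hz1, nn2, sq_nonneg F1]
  have e1 := pow_eq_zero_iff (n := 2) (by norm_num) |>.mp hsq1
  have hz2 : Q2 = 0 := by linarith only [step1, hz1, hsq1]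
  rw [hF1] at e1
  have hsq2 : F2^2 = 0 := by linarith only [step2, hz2, nn3, sq_nonneg F2]
  have e2 := pow_eq_zero_iff (n := 2) (by norm_num) |>.mp hsq2
  have hz3 : Q3 = 0 := by linarith only [step2, hz2, hsq2]
  rw [hF2] at e2
  have hsq3 : F3^2 = 0 := by linarith only [step3, hz3, nn4, sq_nonneg F3]
  have e3 := pow_eq_zero_iff (n := 2) (by norm_num) |>.mp hsq3
  have hz4 : Q4 = 0 := by linarith only [step3, hz3, hsq3]
  rw [hF3] at e3
  have hsq4 : F4^2 = 0 := by linarith only [step4, hz4, nn5, sq_nonneg F4]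
  have e4 := pow_eq_zero_iff (n := 2) (by norm_num) |>.mp hsq4
  have hz5 : Q5 = 0 := by linarith only [step4, hz4, hsq4]
  rw [hF4] at e4
  have hsq5 : F5^2 = 0 := by linarith only [step5, hz5, nn6, sq_nonneg F5]
  have e5 := pow_eq_zero_iff (n := 2) (by norm_num) |>.mp hsq5
  have hz6 : Q6 = 0 := by linarith only [step5, hz5, hsq5]
  rw [hF5] at e5
  have hsq6 : F6^2 = 0 := by linarith only [step6, hz6, nn7, sq_nonneg F6]
  have e6 := pow_eq_zero_iff (n := 2) (by norm_num) |>.mp hsq6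
  have hz7 : Q7 = 0 := by linarith only [step6, hz6, hsq6]
  rw [hF6] at e6
  have hsq7 : F7^2 = 0 := by linarith only [step7, hz7, nn8, sq_nonneg F7]
  have e7 := pow_eq_zero_iff (n := 2) (by norm_num) |>.mp hsq7
  have hz8 : Q8 = 0 := by linarith only [step7, hz7, hsq7]
  rw [hF7] at e7
  have hsq8 : F8^2 = 0 := by linarith only [step8, hz8, nn9, sq_nonneg F8]
  have e8 := pow_eq_zero_iff (n := 2) (by norm_num) |>.mp hsq8
  have hz9 : Q9 = 0 := by linarith only [step8, hz8, hsq8]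
  rw [hF8] at e8
  have hsq9 : F9^2 = 0 := by linarith only [step9, hz9, nn10, sq_nonneg F9]
  have e9 := pow_eq_zero_iff (n := 2) (by norm_num) |>.mp hsq9
  have hz10 : Q10 = 0 := by linarith only [step9, hz9, hsq9]
  rw [hF9] at e9
  have hsq10 : F10^2 = 0 := by linarith only [step10, hz10, nn11, sq_nonneg F10]
  have e10 := pow_eq_zero_iff (n := 2) (by norm_num) |>.mp hsq10
  have hz11 : Q11 = 0 := by linarith only [step10, hz10, hsq10]
  rw [hF10] at e10
  have hsq11 : F11^2 = 0 := by linarith only [step11, hz11, nn12, sq_nonneg F11]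
  have e11 := pow_eq_zero_iff (n := 2) (by norm_num) |>.mp hsq11
  have hz12 : Q12 = 0 := by linarith only [step11, hz11, hsq11]
  rw [hF11] at e11
  have hsq12 : F12^2 = 0 := by linarith only [step12, hz12, nn13, sq_nonneg F12]
  have e12 := pow_eq_zero_iff (n := 2) (by norm_num) |>.mp hsq12
  have hz13 : Q13 = 0 := by linarith only [step12, hz12, hsq12]
  rw [hF12] at e12
  have hsq13 : F13^2 = 0 := by linarith only [step13, hz13, nn14, sq_nonneg F13]
  have e13 := pow_eq_zero_iff (n := 2) (by norm_num) |>.mp hsq13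
  have hz14 : Q14 = 0 := by linarith only [step13, hz13, hsq13]
  rw [hF13] at e13
  have hsq14 : F14^2 = 0 := by linarith only [step14, hz14, nn15, sq_nonneg F14]
  have e14 := pow_eq_zero_iff (n := 2) (by norm_num) |>.mp hsq14
  have hz15 : Q15 = 0 := by linarith only [step14, hz14, hsq14]
  rw [hF14] at e14
  have hsq15 : F15^2 = 0 := by linarith only [step15, hz15, nn16, sq_nonneg F15]
  have e15 := pow_eq_zero_iff (n := 2) (by norm_num) |>.mp hsq15
  have hz16 : Q16 = 0 := by linarith only [step15, hz15, hsq15]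
  rw [hF15] at e15
  have hsq16 : F16^2 = 0 := by linarith only [step16, hz16, nn17, sq_nonneg F16]
  have e16 := pow_eq_zero_iff (n := 2) (by norm_num) |>.mp hsq16
  have hz17 : Q17 = 0 := by linarith only [step16, hz16, hsq16]
  rw [hF16] at e16
  have hsq17 : F17^2 = 0 := by linarith only [step17, hz17, nn18, sq_nonneg F17]
  have e17 := pow_eq_zero_iff (n := 2) (by norm_num) |>.mp hsq17
  have hz18 : Q18 = 0 := by linarith only [step17, hz17, hsq17]
  rw [hF17] at e17
  have hsq18 : F18^2 = 0 := by linarith only [step18, hz18, nn19, sq_nonneg F18]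
  have e18 := pow_eq_zero_iff (n := 2) (by norm_num) |>.mp hsq18
  have hz19 : Q19 = 0 := by linarith only [step18, hz18, hsq18]
  rw [hF18] at e18
  have hsq19 : F19^2 = 0 := by linarith only [step19, hz19, nn20, sq_nonneg F19]
  have e19 := pow_eq_zero_iff (n := 2) (by norm_num) |>.mp hsq19
  rw [hF19] at e19
  have z19 : y19 = 0 := by linarith only [e19]
  have z18 : y18 = 0 := by linarith only [e18, z19]
  have z17 : y17 = 0 := by linarith only [e17, z18, z19]
  have z16 : y16 = 0 := by linarith only [e16, z17, z18, z19]
  have z15 : y15 = 0 := by linarith only [e15, z16, z17, z18, z19]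
  have z14 : y14 = 0 := by linarith only [e14, z15, z16, z17, z18, z19]
  have z13 : y13 = 0 := by linarith only [e13, z14, z15, z16, z17, z18, z19]
  have z12 : y12 = 0 := by linarith only [e12, z13, z14, z15, z16, z17, z18, z19]
  have z11 : y11 = 0 := by linarith only [e11, z12, z13, z14, z15, z16, z17, z18, z19]
  have z10 : y10 = 0 := by linarith only [e10, z11, z12, z13, z14, z15, z16, z17, z18, z19]
  have z9 : y9 = 0 := by linarith only [e9, z10, z11, z12, z13, z14, z15, z16, z17, z18, z19]
  have z8 : y8 = 0 := by linarith only [e8, z9, z10, z11, z12, z13, z14, z15, z16, z17, z18, z19]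
  have z7 : y7 = 0 := by linarith only [e7, z8, z9, z10, z11, z12, z13, z14, z15, z16, z17, z18, z19]
  have z6 : y6 = 0 := by linarith only [e6, z7, z8, z9, z10, z11, z12, z13, z14, z15, z16, z17, z18, z19]
  have z5 : y5 = 0 := by linarith only [e5, z6, z7, z8, z9, z10, z11, z12, z13, z14, z15, z16, z17, z18, z19]
  have z4 : y4 = 0 := by linarith only [e4, z5, z6, z7, z8, z9, z10, z11, z12, z13, z14, z15, z16, z17, z18, z19]
  have z3 : y3 = 0 := by linarith only [e3, z4, z5, z6, z7, z8, z9, z10, z11, z12, z13, z14, z15, z16, z17, z18, z19]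
  have z2 : y2 = 0 := by linarith only [e2, z3, z4, z5, z6, z7, z8, z9, z10, z11, z12, z13, z14, z15, z16, z17, z18, z19]
  have z1 : y1 = 0 := by linarith only [e1, z2, z3, z4, z5, z6, z7, z8, z9, z10, z11, z12, z13, z14, z15, z16, z17, z18, z19]
  have z0 : y0 = 0 := by linarith only [e0, z1, z2, z3, z4, z5, z6, z7, z8, z9, z10, z11, z12, z13, z14, z15, z16, z17, z18, z19]
  exact hy ⟨z0, z1, z2, z3, z4, z5, z6, z7, z8, z9, z10, z11, z12, z13, z14, z15, z16, z17, z18, z19⟩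

set_option maxHeartbeats 1000000 in
/-- The lattice `S₁₁` is negative definite: `xᵀ M x < 0` for every nonzero
`x ∈ ℤ²⁰`. -/
theorem S11_negDef : ∀ x : Fin 20 → ℤ, x ≠ 0 → x ⬝ᵥ S11.mulVec x < 0 := by
  intro x hx
  have hxv : x = ![x 0, x 1, x 2, x 3, x 4, x 5, x 6, x 7, x 8, x 9, x 10, x 11, x 12, x 13, x 14, x 15, x 16, x 17, x 18, x 19] := by funext i; fin_cases i <;> rfl
  rw [hxv]
  apply S11_main
  rintro ⟨z0, z1, z2, z3, z4, z5, z6, z7, z8, z9, z10, z11, z12, z13, z14, z15, z16, z17, z18, z19⟩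
  apply hx
  funext i
  rw [Pi.zero_apply]
  fin_cases i <;> assumption
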